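/- Let A = σ_z ⊗ I₂ / 2 and B = σ_x ⊗ I₂ / 2 (4×4 matrices), and D₁ = (1/√2)diag(1,−1,0,0), D₂ = (1/√2)diag(0,0,1,−1). Then Tr(D_α D_β) = Tr(A_α A_β) for all α, β ∈ {1,2} (with A₁ = A, A₂ = B), and Tr(D_α D_β D_γ) = Tr(A_α A_β A_γ) = 0 for all α, β, γ ∈ {1,2}, while AB ≠ BA. -/
import Mathlib


open Matrix Kronecker

noncomputable def pauliX : Matrix (Fin 2) (Fin 2) ℂ := !![0, 1; 1, 0]
noncomputable def pauliZ : Matrix (Fin 2) (Fin 2) ℂ := !![1, 0; 0, -1]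

/-- `A = σ_z ⊗ I₂ / 2`, on the index set `Fin 2 × Fin 2` ordered lexicographically
(so that `(i,j)` corresponds to the basis vector `2i + j` of `ℂ⁴`). -/
noncomputable def matA : Matrix (Fin 2 × Fin 2) (Fin 2 × Fin 2) ℂ :=
  (1 / 2 : ℂ) • (pauliZ ⊗ₖ (1 : Matrix (Fin 2) (Fin 2) ℂ))

/-- `B = σ_x ⊗ I₂ / 2`. -/
noncomputable def matB : Matrix (Fin 2 × Fin 2) (Fin 2 × Fin 2) ℂ :=
  (1 / 2 : ℂ) • (pauliX ⊗ₖ (1 : Matrix (Fin 2) (Fin 2) ℂ))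

/-- `D₁ = diag(1,−1,0,0)/√2` under the identification `(i,j) ↦ 2i+j`. -/
noncomputable def matD1 : Matrix (Fin 2 × Fin 2) (Fin 2 × Fin 2) ℂ :=
  ((Real.sqrt 2 : ℂ))⁻¹ •
    Matrix.diagonal (fun p : Fin 2 × Fin 2 =>
      if p.1 = 0 then (if p.2 = 0 then (1 : ℂ) else -1) else 0)

/-- `D₂ = diag(0,0,1,−1)/√2`. -/
noncomputable def matD2 : Matrix (Fin 2 × Fin 2) (Fin 2 × Fin 2) ℂ :=
  ((Real.sqrt 2 : ℂ))⁻¹ •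
    Matrix.diagonal (fun p : Fin 2 × Fin 2 =>
      if p.1 = 1 then (if p.2 = 0 then (1 : ℂ) else -1) else 0)

noncomputable def Dv : Fin 2 → Matrix (Fin 2 × Fin 2) (Fin 2 × Fin 2) ℂ := ![matD1, matD2]
noncomputable def Av : Fin 2 → Matrix (Fin 2 × Fin 2) (Fin 2 × Fin 2) ℂ := ![matA, matB]

theorem stmt19 :
    (∀ α β : Fin 2, trace (Dv α * Dv β) = trace (Av α * Av β)) ∧
    (∀ α β γ : Fin 2,
      trace (Dv α * Dv β * Dv γ) = 0 ∧ trace (Av α * Av β * Av γ) = 0) ∧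
    matA * matB ≠ matB * matA := by
  have h2 : ((Real.sqrt 2 : ℝ) : ℂ) * ((Real.sqrt 2 : ℝ) : ℂ) = 2 := by
    norm_cast
    exact Real.mul_self_sqrt (by norm_num)
  have hne : ((Real.sqrt 2 : ℝ) : ℂ) ≠ 0 := by
    intro h
    rw [h, mul_zero] at h2
    norm_num at h2
  refine ⟨?_, ?_, ?_⟩
  · intro α β
    fin_cases α <;> fin_cases β <;>
      simp [Dv, Av, matA, matB, matD1, matD2, pauliX, pauliZ, Matrix.trace,
        Matrix.mul_apply, Fintype.sum_prod_type, Fin.sum_univ_two,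
        Matrix.diagonal, Matrix.kroneckerMap_apply, Matrix.one_apply] <;>
      field_simp <;> linear_combination -h2
  · intro α β γ
    constructor
    · fin_cases α <;> fin_cases β <;> fin_cases γ <;>
        simp [Dv, matD1, matD2, Matrix.smul_mul, Matrix.mul_smul,
          Matrix.diagonal_mul_diagonal, Matrix.trace_smul, Matrix.trace_diagonal,
          Fintype.sum_prod_type, Fin.sum_univ_two] <;> ring
    · fin_cases α <;> fin_cases β <;> fin_cases γ <;>
        simp [Av, matA, matB, Matrix.smul_mul, Matrix.mul_smul,
          ← Matrix.mul_kronecker_mul, Matrix.trace_smul, Matrix.trace_kronecker,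
          Matrix.trace_fin_two, Matrix.mul_apply, Fin.sum_univ_two,
          pauliX, pauliZ]
  · intro h
    have := congrFun (congrFun h (0,0)) (1,0)
    simp [matA, matB, pauliX, pauliZ, Matrix.mul_apply, Fintype.sum_prod_type,
      Fin.sum_univ_two, Matrix.kroneckerMap_apply, Matrix.one_apply] at this
    norm_num at this
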